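/- Let Y ≥ X a.s. with E[(Y−X)²] ≤ Δ where Δ = 4/((2p−1)L^{2p−1}) + 8μ(c+c')/n, μ ≥ 0, and suppose F_X is Lipschitz with constant f_max. Then sup_x (F_X(x) − F_Y(x)) ≤ (2^{1/3} + 2^{−2/3}) f_max^{2/3} Δ^{1/3}. -/
import Mathlib


open MeasureTheory Real

/-- Subsampled envelope CDF bound: if `Y ≥ X` a.s., `E[(Y-X)²] ≤ Δ` with
`Δ = 4/((2p-1)L^(2p-1)) + 8μ(c+c')/n`, and `F_X` is `f_max`-Lipschitz, then
`sup_x (F_X(x) - F_Y(x)) ≤ (2^(1/3) + 2^(-2/3)) f_max^(2/3) Δ^(1/3)`. -/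
theorem cdf_subsampled_tradeoff {Ω : Type*} [MeasurableSpace Ω] (P : Measure Ω)
    [IsProbabilityMeasure P]
    (X Y : Ω → ℝ) (hX : Measurable X) (hY : Measurable Y)
    (hdom : ∀ᵐ ω ∂P, X ω ≤ Y ω)
    (hint : Integrable (fun ω => (Y ω - X ω) ^ 2) P)
    (p : ℝ) (hp : 1 / 2 < p) (L : ℝ) (hL : 1 ≤ L) (n : ℕ) (hn : 1 ≤ n)
    (c c' μ : ℝ) (hc : 0 ≤ c) (hc' : 0 ≤ c') (hμ : 0 ≤ μ)
    (f_max : ℝ) (hf : 0 < f_max) (Δ : ℝ)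
    (hΔ : Δ = 4 / ((2 * p - 1) * L ^ (2 * p - 1)) + 8 * μ * (c + c') / n)
    (hE : (∫ ω, (Y ω - X ω) ^ 2 ∂P) ≤ Δ)
    (hLip : ∀ x : ℝ, ∀ ε > (0 : ℝ),
      (P {ω | X ω ≤ x}).toReal - (P {ω | X ω ≤ x - ε}).toReal ≤ ε * f_max) :
    ∀ x : ℝ,
      (P {ω | X ω ≤ x}).toReal - (P {ω | Y ω ≤ x}).toReal ≤
        ((2 : ℝ) ^ ((1 : ℝ) / 3) + (2 : ℝ) ^ (-(2 : ℝ) / 3)) * f_max ^ ((2 : ℝ) / 3) *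
          Δ ^ ((1 : ℝ) / 3) := by
  have hΔpos : 0 < Δ := by
    rw [hΔ]
    have hL0 : (0:ℝ) < L := lt_of_lt_of_le one_pos hL
    have h1 : 0 < (2 * p - 1) * L ^ (2 * p - 1) :=
      mul_pos (by linarith) (rpow_pos_of_pos hL0 _)
    have h2 : (0:ℝ) ≤ 8 * μ * (c + c') / n := by positivity
    positivity
  intro x
  set ε : ℝ := (2 * Δ / f_max) ^ ((1:ℝ)/3) with hε
  have hbase : 0 < 2 * Δ / f_max := by positivity
  have hεpos : 0 < ε := rpow_pos_of_pos hbase _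
  -- Markov / Chebyshev step
  have markov := mul_meas_ge_le_integral_of_nonneg
    (μ := P) (f := fun ω => (Y ω - X ω) ^ 2)
    (Filter.Eventually.of_forall fun ω => sq_nonneg _) hint (ε ^ 2)
  have hC : (P {ω | ε ^ 2 ≤ (Y ω - X ω) ^ 2}).toReal ≤ Δ / ε ^ 2 := by
    rw [le_div_iff₀ (by positivity)]
    calc (P {ω | ε ^ 2 ≤ (Y ω - X ω) ^ 2}).toReal * ε ^ 2
        = ε ^ 2 * (P {ω | ε ^ 2 ≤ (Y ω - X ω) ^ 2}).toReal := by ring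
      _ ≤ ∫ ω, (Y ω - X ω) ^ 2 ∂P := markov
      _ ≤ Δ := hE
  -- measure inequality
  have hsub : P ({ω | X ω ≤ x - ε} \ {ω | Y ω ≤ x}) ≤ P {ω | ε ^ 2 ≤ (Y ω - X ω) ^ 2} := by
    apply measure_mono_ae
    filter_upwards [hdom] with ω hω hmem
    obtain ⟨h1, h2⟩ := hmem
    simp only [Set.mem_setOf_eq, not_le] at h1 h2 ⊢
    have h3 : ε ≤ Y ω - X ω := by linarith
    exact pow_le_pow_left₀ hεpos.le h3 2
  have hfin : ∀ s : Set Ω, P s ≠ ⊤ := fun s => (measure_lt_top P s).ne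
  have h2 : (P {ω | X ω ≤ x - ε}).toReal - (P {ω | Y ω ≤ x}).toReal ≤ Δ / ε ^ 2 := by
    have hle : P {ω | X ω ≤ x - ε} ≤ P {ω | Y ω ≤ x} + P ({ω | X ω ≤ x - ε} \ {ω | Y ω ≤ x}) := by
      calc P {ω | X ω ≤ x - ε}
          ≤ P ({ω | X ω ≤ x - ε} ∩ {ω | Y ω ≤ x}) + P ({ω | X ω ≤ x - ε} \ {ω | Y ω ≤ x}) :=
            measure_le_inter_add_diff _ _ _
        _ ≤ P {ω | Y ω ≤ x} + P ({ω | X ω ≤ x - ε} \ {ω | Y ω ≤ x}) := by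
            gcongr; exact Set.inter_subset_right
    have := ENNReal.toReal_mono (by
      exact ENNReal.add_ne_top.mpr ⟨hfin _, hfin _⟩) hle
    rw [ENNReal.toReal_add (hfin _) (hfin _)] at this
    have hsr := ENNReal.toReal_mono (hfin _) hsub
    linarith [hC, hsr, this]
  have h1 := hLip x ε hεpos
  -- the algebraic identity
  have key : ε * f_max + Δ / ε ^ 2 =
      ((2 : ℝ) ^ ((1 : ℝ) / 3) + (2 : ℝ) ^ (-(2 : ℝ) / 3)) * f_max ^ ((2 : ℝ) / 3) *
        Δ ^ ((1 : ℝ) / 3) := by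
    have hεeq : ε = 2 ^ ((1:ℝ)/3) * Δ ^ ((1:ℝ)/3) * f_max ^ (-(1:ℝ)/3) := by
      rw [hε, div_rpow (by positivity) hf.le, mul_rpow (by norm_num) hΔpos.le,
        div_eq_mul_inv, ← rpow_neg hf.le]
      norm_num
    have e1 : ε * f_max = 2 ^ ((1:ℝ)/3) * f_max ^ ((2:ℝ)/3) * Δ ^ ((1:ℝ)/3) := by
      rw [hεeq]
      have : f_max ^ (-(1:ℝ)/3) * f_max = f_max ^ ((2:ℝ)/3) := by
        nth_rewrite 2 [← rpow_one f_max]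
        rw [← rpow_add hf]; norm_num
      calc 2 ^ ((1:ℝ)/3) * Δ ^ ((1:ℝ)/3) * f_max ^ (-(1:ℝ)/3) * f_max
          = 2 ^ ((1:ℝ)/3) * Δ ^ ((1:ℝ)/3) * (f_max ^ (-(1:ℝ)/3) * f_max) := by ring
        _ = _ := by rw [this]; ring
    have e2 : Δ / ε ^ 2 = 2 ^ (-(2:ℝ)/3) * f_max ^ ((2:ℝ)/3) * Δ ^ ((1:ℝ)/3) := by
      have hε2 : ε ^ 2 = 2 ^ ((2:ℝ)/3) * Δ ^ ((2:ℝ)/3) * f_max ^ (-(2:ℝ)/3) := by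
        rw [hεeq, mul_pow, mul_pow, ← rpow_natCast (2 ^ ((1:ℝ)/3)) 2,
          ← rpow_natCast (Δ ^ ((1:ℝ)/3)) 2, ← rpow_natCast (f_max ^ (-(1:ℝ)/3)) 2,
          ← rpow_mul (by norm_num), ← rpow_mul hΔpos.le, ← rpow_mul hf.le]
        norm_num
      rw [hε2]
      rw [div_eq_iff (by positivity)]
      refine Eq.symm ?_
      have c2 : (2:ℝ) ^ (-(2:ℝ)/3) * 2 ^ ((2:ℝ)/3) = 1 := by
        rw [← rpow_add (by norm_num : (0:ℝ) < 2)]; norm_num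
      have cf : f_max ^ ((2:ℝ)/3) * f_max ^ (-(2:ℝ)/3) = 1 := by
        rw [← rpow_add hf]; norm_num
      have cΔ : Δ ^ ((1:ℝ)/3) * Δ ^ ((2:ℝ)/3) = Δ := by
        rw [← rpow_add hΔpos]; norm_num
      calc 2 ^ (-(2:ℝ)/3) * f_max ^ ((2:ℝ)/3) * Δ ^ ((1:ℝ)/3) *
            (2 ^ ((2:ℝ)/3) * Δ ^ ((2:ℝ)/3) * f_max ^ (-(2:ℝ)/3))
          = (2 ^ (-(2:ℝ)/3) * 2 ^ ((2:ℝ)/3)) * (f_max ^ ((2:ℝ)/3) * f_max ^ (-(2:ℝ)/3)) *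
            (Δ ^ ((1:ℝ)/3) * Δ ^ ((2:ℝ)/3)) := by ring
        _ = Δ := by rw [c2, cf, cΔ]; ring
    rw [e1, e2]; ring
  linarith [h1, h2]
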